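/- Let H and M be separable real Hilbert spaces, κ ∈ (0,1), and N, β > 0. Then there exists a constant C > 0, depending only on N and β, such that for all Borel probability measures ν₁, ν₂, ν₃ on H × M, W_{d^{με}_{N,β/2}}(ν₁, ν₃) ≤ C ( W_{d^{με}_{N,β}}(ν₁, ν₂) + W_{d^{με}_{N,β}}(ν₂, ν₃) ), where W_d denotes the coupling distance associated with the cost d. -/

import Mathlib

open MeasureTheory
open scoped ENNReal
open ProbabilityTheory

noncomputable section

variable {H M : Type*} [NormedAddCommGroup H] [InnerProductSpace ℝ H]
  [NormedAddCommGroup M] [InnerProductSpace ℝ M]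

/-- `Ψ₀(u,η) = ½‖u‖² + ½(1-κ)‖η‖²`. -/
def psi0 (κ : ℝ) (U : H × M) : ℝ :=
  (1 / 2) * ‖U.1‖ ^ 2 + (1 / 2) * (1 - κ) * ‖U.2‖ ^ 2

/-- The `ℓ²`-product norm `‖(u,η)‖ = (‖u‖² + ‖η‖²)^{1/2}` on `H × M`. -/
def prodNormL2 (U : H × M) : ℝ := Real.sqrt (‖U.1‖ ^ 2 + ‖U.2‖ ^ 2)

/-- The distance-like function `d^{με}_{N,β}` on `H × M`. -/
def dEps (κ N β : ℝ) (U V : H × M) : ℝ :=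
  Real.sqrt (min (N * prodNormL2 (U - V)) 1 *
    (1 + Real.exp (β * psi0 κ U) + Real.exp (β * psi0 κ V)))

/-- The coupling (Wasserstein-type) distance associated with a cost `d`. -/
def Wd {E : Type*} [MeasurableSpace E] (μ ν : Measure E) (d : E → E → ℝ) : ℝ≥0∞ :=
  sInf { r : ℝ≥0∞ | ∃ π : Measure (E × E), IsProbabilityMeasure π ∧
    π.map Prod.fst = μ ∧ π.map Prod.snd = ν ∧
    r = ∫⁻ p, ENNReal.ofReal (d p.1 p.2) ∂π }

set_option linter.unusedVariables false
set_option linter.unusedSectionVars false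

lemma sqrt_add_le'' {x y : ℝ} (hx : 0 ≤ x) (hy : 0 ≤ y) :
    Real.sqrt (x + y) ≤ Real.sqrt x + Real.sqrt y := by
  have h : x + y ≤ (Real.sqrt x + Real.sqrt y) ^ 2 := by
    nlinarith [Real.sq_sqrt hx, Real.sq_sqrt hy, Real.sqrt_nonneg x, Real.sqrt_nonneg y,
      mul_nonneg (Real.sqrt_nonneg x) (Real.sqrt_nonneg y)]
  calc Real.sqrt (x + y) ≤ Real.sqrt ((Real.sqrt x + Real.sqrt y) ^ 2) := Real.sqrt_le_sqrt h
    _ = _ := Real.sqrt_sq (by positivity)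

lemma min_subadd'' {x y z : ℝ} (hx : 0 ≤ x) (hy : 0 ≤ y) (hz : z ≤ x + y) :
    min z 1 ≤ min x 1 + min y 1 := by
  rcases le_total 1 x with h | h
  · have h1 : min x 1 = 1 := min_eq_right h
    have h2 : (0:ℝ) ≤ min y 1 := le_min hy zero_le_one
    have h3 : min z 1 ≤ 1 := min_le_right _ _
    linarith
  · rcases le_total 1 y with h' | h'
    · have h1 : min y 1 = 1 := min_eq_right h'
      have h2 : (0:ℝ) ≤ min x 1 := le_min hx zero_le_one
      have h3 : min z 1 ≤ 1 := min_le_right _ _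
      linarith
    · rw [min_eq_left h, min_eq_left h']
      exact le_trans (min_le_left _ _) hz

lemma sqrt_sq_add_sq_triangle' {a1 a2 b1 b2 : ℝ} (ha1 : 0 ≤ a1) (ha2 : 0 ≤ a2)
    (hb1 : 0 ≤ b1) (hb2 : 0 ≤ b2) :
    Real.sqrt ((a1 + b1) ^ 2 + (a2 + b2) ^ 2) ≤
      Real.sqrt (a1 ^ 2 + a2 ^ 2) + Real.sqrt (b1 ^ 2 + b2 ^ 2) := by
  set x := Real.sqrt (a1 ^ 2 + a2 ^ 2) with hxd
  set y := Real.sqrt (b1 ^ 2 + b2 ^ 2) with hyd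
  have hxn : 0 ≤ x := Real.sqrt_nonneg _
  have hyn : 0 ≤ y := Real.sqrt_nonneg _
  have hx2 : x ^ 2 = a1 ^ 2 + a2 ^ 2 := Real.sq_sqrt (by positivity)
  have hy2 : y ^ 2 = b1 ^ 2 + b2 ^ 2 := Real.sq_sqrt (by positivity)
  have key : a1 * b1 + a2 * b2 ≤ x * y := by
    nlinarith [sq_nonneg (a1 * b2 - a2 * b1), mul_nonneg hxn hyn,
      mul_nonneg (mul_nonneg ha1 hb1) (mul_nonneg ha2 hb2),
      mul_nonneg ha1 hb1, mul_nonneg ha2 hb2]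
  have h : (a1 + b1) ^ 2 + (a2 + b2) ^ 2 ≤ (x + y) ^ 2 := by nlinarith
  calc Real.sqrt ((a1 + b1) ^ 2 + (a2 + b2) ^ 2) ≤ Real.sqrt ((x + y) ^ 2) :=
        Real.sqrt_le_sqrt h
    _ = x + y := Real.sqrt_sq (by positivity)

lemma key_real' {s t v1 v2 w1 w2 : ℝ} (hs : 0 < s) (hs1 : s ≤ 1) (ht : 0 ≤ t)
    (hv1 : 0 ≤ v1) (hv2 : 0 ≤ v2) (hw1 : 0 ≤ w1) (hw2 : 0 ≤ w2)
    (h1 : w1 ≤ v1 + t) (h2 : w2 ≤ v2 + t) :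
    (1/2) * ((1/2) * w1 ^ 2 + (1/2) * s * w2 ^ 2) ≤
      ((1/2) * v1 ^ 2 + (1/2) * s * v2 ^ 2) + (t ^ 2 / 2 + t ^ 2 / s) := by
  have hts : s * (t ^ 2 / s) = t ^ 2 := by field_simp
  have hmul : s * ((1/2) * ((1/2) * w1 ^ 2 + (1/2) * s * w2 ^ 2)) ≤
      s * (((1/2) * v1 ^ 2 + (1/2) * s * v2 ^ 2) + (t ^ 2 / 2 + t ^ 2 / s)) := by
    have expand : s * (((1/2) * v1 ^ 2 + (1/2) * s * v2 ^ 2) + (t ^ 2 / 2 + t ^ 2 / s))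
        = s * ((1/2) * v1 ^ 2 + (1/2) * s * v2 ^ 2) + s * (t ^ 2 / 2) + t ^ 2 := by
      field_simp; ring
    rw [expand]
    nlinarith [sq_nonneg (s * v1 - 2 * t), mul_nonneg hs.le (sq_nonneg (s * v2 - 2 * t)),
      mul_nonneg hs.le (mul_nonneg (by linarith : (0:ℝ) ≤ v1 + t - w1) (by linarith : (0:ℝ) ≤ v1 + t + w1)),
      mul_nonneg (mul_nonneg hs.le hs.le) (mul_nonneg (by linarith : (0:ℝ) ≤ v2 + t - w2) (by linarith : (0:ℝ) ≤ v2 + t + w2)),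
      mul_nonneg (mul_nonneg (by linarith : (0:ℝ) ≤ 1 - s) hs.le) (sq_nonneg t),
      mul_nonneg (by linarith : (0:ℝ) ≤ 1 - s) (sq_nonneg t),
      mul_nonneg (mul_nonneg (by linarith : (0:ℝ) ≤ 1 - s) hs.le) (sq_nonneg v1),
      mul_nonneg (mul_nonneg (by linarith : (0:ℝ) ≤ 1 - s) hs.le) (sq_nonneg v2)]
  exact le_of_mul_le_mul_left hmul hs

lemma psi0_nonneg {κ : ℝ} (hκ : κ ≤ 1) (U : H × M) : 0 ≤ psi0 κ U := by
  have h1 := sq_nonneg ‖U.1‖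
  have h2 := sq_nonneg ‖U.2‖
  unfold psi0
  nlinarith

lemma prodNormL2_nonneg (U : H × M) : 0 ≤ prodNormL2 U := Real.sqrt_nonneg _

lemma norm_fst_le_prodNormL2 (U : H × M) : ‖U.1‖ ≤ prodNormL2 U :=
  calc ‖U.1‖ = Real.sqrt (‖U.1‖ ^ 2) := (Real.sqrt_sq (norm_nonneg _)).symm
    _ ≤ prodNormL2 U := Real.sqrt_le_sqrt (by nlinarith [sq_nonneg ‖U.2‖])

lemma norm_snd_le_prodNormL2 (U : H × M) : ‖U.2‖ ≤ prodNormL2 U :=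
  calc ‖U.2‖ = Real.sqrt (‖U.2‖ ^ 2) := (Real.sqrt_sq (norm_nonneg _)).symm
    _ ≤ prodNormL2 U := Real.sqrt_le_sqrt (by nlinarith [sq_nonneg ‖U.1‖])

lemma prodNormL2_triangle (U V W : H × M) :
    prodNormL2 (U - W) ≤ prodNormL2 (U - V) + prodNormL2 (V - W) := by
  unfold prodNormL2
  simp only [Prod.fst_sub, Prod.snd_sub]
  have t1 : ‖U.1 - W.1‖ ≤ ‖U.1 - V.1‖ + ‖V.1 - W.1‖ := norm_sub_le_norm_sub_add_norm_sub _ _ _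
  have t2 : ‖U.2 - W.2‖ ≤ ‖U.2 - V.2‖ + ‖V.2 - W.2‖ := norm_sub_le_norm_sub_add_norm_sub _ _ _
  have hmono : ‖U.1 - W.1‖ ^ 2 + ‖U.2 - W.2‖ ^ 2 ≤
      (‖U.1 - V.1‖ + ‖V.1 - W.1‖) ^ 2 + (‖U.2 - V.2‖ + ‖V.2 - W.2‖) ^ 2 := by
    nlinarith [norm_nonneg (U.1 - W.1), norm_nonneg (U.2 - W.2),
      norm_nonneg (U.1 - V.1), norm_nonneg (V.1 - W.1), norm_nonneg (U.2 - V.2),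
      norm_nonneg (V.2 - W.2)]
  calc Real.sqrt (‖U.1 - W.1‖ ^ 2 + ‖U.2 - W.2‖ ^ 2)
      ≤ Real.sqrt ((‖U.1 - V.1‖ + ‖V.1 - W.1‖) ^ 2 + (‖U.2 - V.2‖ + ‖V.2 - W.2‖) ^ 2) :=
        Real.sqrt_le_sqrt hmono
    _ ≤ _ := sqrt_sq_add_sq_triangle' (norm_nonneg _) (norm_nonneg _) (norm_nonneg _)
          (norm_nonneg _)

lemma psi0_shift {κ N β : ℝ} (hκ : κ ∈ Set.Ioo (0:ℝ) 1) (hN : 0 < N) (hβ : 0 < β)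
    {V W : H × M} (h : N * prodNormL2 (W - V) ≤ 1) :
    β / 2 * psi0 κ W ≤ β * psi0 κ V + (β / (2 * N ^ 2) + β / ((1 - κ) * N ^ 2)) := by
  obtain ⟨hκ0, hκ1⟩ := hκ
  set t : ℝ := 1 / N with htd
  have ht : 0 ≤ t := by positivity
  have hpn : prodNormL2 (W - V) ≤ t := by
    rw [htd, le_div_iff₀ hN]; linarith [h, mul_comm N (prodNormL2 (W - V)),
      mul_comm (prodNormL2 (W - V)) N]
  have hf : ‖W.1 - V.1‖ ≤ t := le_trans (by simpa using norm_fst_le_prodNormL2 (W - V)) hpn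
  have hsn : ‖W.2 - V.2‖ ≤ t := le_trans (by simpa using norm_snd_le_prodNormL2 (W - V)) hpn
  have h1 : ‖W.1‖ ≤ ‖V.1‖ + t := by
    have := norm_sub_norm_le W.1 V.1
    linarith
  have h2 : ‖W.2‖ ≤ ‖V.2‖ + t := by
    have := norm_sub_norm_le W.2 V.2
    linarith
  have key := key_real' (s := 1 - κ) (t := t) (by linarith) (by linarith) ht
    (norm_nonneg V.1) (norm_nonneg V.2) (norm_nonneg W.1) (norm_nonneg W.2) h1 h2
  have hD : β / (2 * N ^ 2) + β / ((1 - κ) * N ^ 2) = β * (t ^ 2 / 2 + t ^ 2 / (1 - κ)) := by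
    rw [htd]
    have hκ1' : (1:ℝ) - κ ≠ 0 := by linarith
    field_simp
  rw [hD]
  unfold psi0
  calc β / 2 * ((1/2) * ‖W.1‖ ^ 2 + (1/2) * (1 - κ) * ‖W.2‖ ^ 2)
      = β * ((1/2) * ((1/2) * ‖W.1‖ ^ 2 + (1/2) * (1 - κ) * ‖W.2‖ ^ 2)) := by ring
    _ ≤ β * (((1/2) * ‖V.1‖ ^ 2 + (1/2) * (1 - κ) * ‖V.2‖ ^ 2) + (t ^ 2 / 2 + t ^ 2 / (1 - κ))) :=
        mul_le_mul_of_nonneg_left key hβ.le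
    _ = _ := by ring

lemma dEps_nonneg (κ N β : ℝ) (U V : H × M) : 0 ≤ dEps κ N β U V := Real.sqrt_nonneg _

set_option maxHeartbeats 1000000 in
lemma dEps_generalized_triangle (κ : ℝ) (hκ : κ ∈ Set.Ioo (0:ℝ) 1) (N β : ℝ)
    (hN : 0 < N) (hβ : 0 < β) :
    ∃ C ≥ (1:ℝ), ∀ U V W : H × M,
      dEps κ N (β / 2) U W ≤ C * (dEps κ N β U V + dEps κ N β V W) := by
  obtain ⟨hκ0, hκ1⟩ := hκ
  set D : ℝ := β / (2 * N ^ 2) + β / ((1 - κ) * N ^ 2) with hDd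
  have hD : 0 ≤ D := by
    have h1κ : (0:ℝ) < 1 - κ := by linarith
    positivity
  set Ee : ℝ := Real.exp D with hEd
  have hE1 : 1 ≤ Ee := Real.one_le_exp hD
  refine ⟨Real.sqrt (4 + 2 * Ee), ?_, ?_⟩
  · rw [show (1:ℝ) = Real.sqrt 1 from Real.sqrt_one.symm]
    exact Real.sqrt_le_sqrt (by linarith)
  intro U V W
  unfold dEps
  set a := min (N * prodNormL2 (U - V)) 1 with had
  set b := min (N * prodNormL2 (V - W)) 1 with hbd
  set c := min (N * prodNormL2 (U - W)) 1 with hcd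
  have ha0 : 0 ≤ a := le_min (mul_nonneg hN.le (prodNormL2_nonneg _)) zero_le_one
  have hb0 : 0 ≤ b := le_min (mul_nonneg hN.le (prodNormL2_nonneg _)) zero_le_one
  have ha1 : a ≤ 1 := min_le_right _ _
  have hb1 : b ≤ 1 := min_le_right _ _
  have hcab : c ≤ a + b := by
    rw [had, hbd, hcd]
    refine min_subadd'' (mul_nonneg hN.le (prodNormL2_nonneg _))
      (mul_nonneg hN.le (prodNormL2_nonneg _)) ?_
    have htri := mul_le_mul_of_nonneg_left (prodNormL2_triangle U V W) hN.le
    rw [mul_add] at htri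
    exact htri
  have hψU : 0 ≤ psi0 κ U := psi0_nonneg (by linarith) U
  have hψV : 0 ≤ psi0 κ V := psi0_nonneg (by linarith) V
  have hψW : 0 ≤ psi0 κ W := psi0_nonneg (by linarith) W
  set eU := Real.exp (β * psi0 κ U) with heU
  set eV := Real.exp (β * psi0 κ V) with heV
  set eW := Real.exp (β * psi0 κ W) with heW
  set eU2 := Real.exp (β / 2 * psi0 κ U) with heU2
  set eW2 := Real.exp (β / 2 * psi0 κ W) with heW2
  have heVpos : 0 < eV := Real.exp_pos _
  have heUpos : 0 < eU := Real.exp_pos _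
  have heWpos : 0 < eW := Real.exp_pos _
  have heU2pos : 0 < eU2 := Real.exp_pos _
  have heW2pos : 0 < eW2 := Real.exp_pos _
  set T₁ := 1 + eU + eV with hT₁
  set T₂ := 1 + eV + eW with hT₂
  have hT₁1 : 1 ≤ T₁ := by rw [hT₁]; linarith
  have hT₂1 : 1 ≤ T₂ := by rw [hT₂]; linarith
  have heU2le : eU2 ≤ eU := by
    rw [heU2, heU]
    exact Real.exp_le_exp.mpr (by nlinarith [mul_nonneg hβ.le hψU])
  have heW2le : eW2 ≤ eW := by
    rw [heW2, heW]
    exact Real.exp_le_exp.mpr (by nlinarith [mul_nonneg hβ.le hψW])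
  have haT : 0 ≤ a * T₁ := mul_nonneg ha0 (by linarith)
  have hbT : 0 ≤ b * T₂ := mul_nonneg hb0 (by linarith)
  have hsymWV : prodNormL2 (W - V) = prodNormL2 (V - W) := by
    unfold prodNormL2
    simp only [Prod.fst_sub, Prod.snd_sub]
    rw [norm_sub_rev W.1 V.1, norm_sub_rev W.2 V.2]
  have crossW : a * eW2 ≤ Ee * (a * T₁ + b * T₂) := by
    rcases le_or_gt 1 (N * prodNormL2 (V - W)) with hb' | hb'
    · have hbeq : b = 1 := by rw [hbd]; exact min_eq_right hb'
      have h1 : a * eW2 ≤ eW := by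
        calc a * eW2 ≤ 1 * eW2 := mul_le_mul_of_nonneg_right ha1 heW2pos.le
          _ = eW2 := one_mul _
          _ ≤ eW := heW2le
      have h2 : eW ≤ b * T₂ := by rw [hbeq, one_mul, hT₂]; linarith
      nlinarith [mul_nonneg (by linarith : (0:ℝ) ≤ Ee - 1) hbT,
        mul_nonneg (by linarith : (0:ℝ) ≤ Ee) haT]
    · have shift := psi0_shift (V := V) (W := W) ⟨hκ0, hκ1⟩ hN hβ
        (by rw [hsymWV]; linarith)
      have h3 : eW2 ≤ Ee * eV := by
        rw [heW2, hEd, heV, ← Real.exp_add]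
        exact Real.exp_le_exp.mpr (by linarith)
      have h4 : eV ≤ T₁ := by rw [hT₁]; linarith
      nlinarith [mul_le_mul_of_nonneg_left h3 ha0,
        mul_nonneg (mul_nonneg ha0 (by linarith : (0:ℝ) ≤ Ee)) (by linarith : (0:ℝ) ≤ T₁ - eV),
        mul_nonneg (by linarith : (0:ℝ) ≤ Ee) hbT]
  have crossU : b * eU2 ≤ Ee * (a * T₁ + b * T₂) := by
    rcases le_or_gt 1 (N * prodNormL2 (U - V)) with ha' | ha'
    · have haeq : a = 1 := by rw [had]; exact min_eq_right ha'
      have h1 : b * eU2 ≤ eU := by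
        calc b * eU2 ≤ 1 * eU2 := mul_le_mul_of_nonneg_right hb1 heU2pos.le
          _ = eU2 := one_mul _
          _ ≤ eU := heU2le
      have h2 : eU ≤ a * T₁ := by rw [haeq, one_mul, hT₁]; linarith
      nlinarith [mul_nonneg (by linarith : (0:ℝ) ≤ Ee - 1) haT,
        mul_nonneg (by linarith : (0:ℝ) ≤ Ee) hbT]
    · have shift := psi0_shift (V := V) (W := U) ⟨hκ0, hκ1⟩ hN hβ (by linarith)
      have h3 : eU2 ≤ Ee * eV := by
        rw [heU2, hEd, heV, ← Real.exp_add]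
        exact Real.exp_le_exp.mpr (by linarith)
      have h4 : eV ≤ T₂ := by rw [hT₂]; linarith
      nlinarith [mul_le_mul_of_nonneg_left h3 hb0,
        mul_nonneg (mul_nonneg hb0 (by linarith : (0:ℝ) ≤ Ee)) (by linarith : (0:ℝ) ≤ T₂ - eV),
        mul_nonneg (by linarith : (0:ℝ) ≤ Ee) haT]
  have hmain : c * (1 + eU2 + eW2) ≤ (4 + 2 * Ee) * (a * T₁ + b * T₂) := by
    have hS0 : (0:ℝ) ≤ 1 + eU2 + eW2 := by linarith
    have hstep : c * (1 + eU2 + eW2) ≤ (a + b) * (1 + eU2 + eW2) :=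
      mul_le_mul_of_nonneg_right hcab hS0
    have hexp : (a + b) * (1 + eU2 + eW2)
        = (a + a * eU2 + a * eW2) + (b + b * eU2 + b * eW2) := by ring
    have p1 : a ≤ a * T₁ := le_mul_of_one_le_right ha0 hT₁1
    have p2 : a * eU2 ≤ a * T₁ :=
      mul_le_mul_of_nonneg_left (by rw [hT₁]; linarith) ha0
    have p3 : b ≤ b * T₂ := le_mul_of_one_le_right hb0 hT₂1
    have p4 : b * eW2 ≤ b * T₂ :=
      mul_le_mul_of_nonneg_left (by rw [hT₂]; linarith) hb0
    have hid : (4 + 2 * Ee) * (a * T₁ + b * T₂)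
        = 2 * (a * T₁) + 2 * (b * T₂) + 2 * (Ee * (a * T₁ + b * T₂))
          + (2 * (a * T₁) + 2 * (b * T₂)) := by ring
    rw [hid, hexp] at *
    linarith [hstep, p1, p2, p3, p4, crossW, crossU, haT, hbT]
  calc Real.sqrt (c * (1 + eU2 + eW2)) ≤ Real.sqrt ((4 + 2 * Ee) * (a * T₁ + b * T₂)) :=
        Real.sqrt_le_sqrt hmain
    _ = Real.sqrt (4 + 2 * Ee) * Real.sqrt (a * T₁ + b * T₂) :=
        Real.sqrt_mul (by linarith) _
    _ ≤ Real.sqrt (4 + 2 * Ee) * (Real.sqrt (a * T₁) + Real.sqrt (b * T₂)) :=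
        mul_le_mul_of_nonneg_left (sqrt_add_le'' haT hbT) (Real.sqrt_nonneg _)


lemma continuous_psi0 (κ : ℝ) : Continuous fun U : H × M => psi0 κ U := by
  unfold psi0
  fun_prop

lemma continuous_dEps (κ N β : ℝ) :
    Continuous fun p : (H × M) × (H × M) => dEps κ N β p.1 p.2 := by
  unfold dEps prodNormL2
  apply Real.continuous_sqrt.comp
  apply Continuous.mul
  · apply Continuous.min _ continuous_const
    apply Continuous.mul continuous_const
    apply Real.continuous_sqrt.comp
    fun_prop
  · have h1 : Continuous fun p : (H × M) × (H × M) => psi0 κ p.1 :=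
      (continuous_psi0 κ).comp continuous_fst
    have h2 : Continuous fun p : (H × M) × (H × M) => psi0 κ p.2 :=
      (continuous_psi0 κ).comp continuous_snd
    exact (continuous_const.add (Real.continuous_exp.comp (continuous_const.mul h1))).add
      (Real.continuous_exp.comp (continuous_const.mul h2))


lemma Wd_le_glue {E : Type*} [MeasurableSpace E] [StandardBorelSpace E] [Nonempty E]
    {ν₁ ν₂ ν₃ : Measure E}
    {d d' : E → E → ℝ} (hd : ∀ x y, 0 ≤ d x y)
    (hmd : Measurable fun p : E × E => d p.1 p.2)
    (hmd' : Measurable fun p : E × E => d' p.1 p.2)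
    {C : ℝ} (hC0 : 0 ≤ C) (hC : ∀ x y z, d' x z ≤ C * (d x y + d y z))
    {π₁₂ π₂₃ : Measure (E × E)} [IsProbabilityMeasure π₁₂] [IsProbabilityMeasure π₂₃]
    (h12f : π₁₂.map Prod.fst = ν₁) (h12s : π₁₂.map Prod.snd = ν₂)
    (h23f : π₂₃.map Prod.fst = ν₂) (h23s : π₂₃.map Prod.snd = ν₃) :
    Wd ν₁ ν₃ d' ≤ ENNReal.ofReal C *
      ((∫⁻ p, ENNReal.ofReal (d p.1 p.2) ∂π₁₂) + ∫⁻ p, ENNReal.ofReal (d p.1 p.2) ∂π₂₃) := by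
  classical
  set K : Kernel E E := π₂₃.condKernel with hK
  set L : Kernel (E × E) E := K.comap Prod.snd measurable_snd with hL
  haveI : IsMarkovKernel L := by
    constructor
    intro p
    rw [hL, Kernel.comap_apply]
    infer_instance
  set π : Measure ((E × E) × E) := π₁₂ ⊗ₘ L with hπ
  haveI : IsProbabilityMeasure π := by rw [hπ]; infer_instance
  have hφ : Measurable (fun p : (E × E) × E => (p.1.2, p.2)) :=
    (measurable_snd.comp measurable_fst).prodMk measurable_snd
  have hψ : Measurable (fun p : (E × E) × E => (p.1.1, p.2)) :=
    (measurable_fst.comp measurable_fst).prodMk measurable_snd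
  -- the (2,3) marginal of π is π₂₃
  have hmarg23 : π.map (fun p : (E × E) × E => (p.1.2, p.2)) = π₂₃ := by
    refine Measure.ext fun s hs => ?_
    rw [Measure.map_apply hφ hs, hπ, Measure.compProd_apply (hφ hs)]
    have hint : ∀ xy : E × E, (L xy) (Prod.mk xy ⁻¹' ((fun p : (E × E) × E => (p.1.2, p.2)) ⁻¹' s))
        = (K xy.2) (Prod.mk xy.2 ⁻¹' s) := by
      intro xy
      rw [hL, Kernel.comap_apply]
      rfl
    simp_rw [hint]
    have hg : Measurable fun y => (K y) (Prod.mk y ⁻¹' s) :=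
      Kernel.measurable_kernel_prodMk_left hs
    have step : ∫⁻ xy : E × E, (K xy.2) (Prod.mk xy.2 ⁻¹' s) ∂π₁₂
        = ∫⁻ y, (K y) (Prod.mk y ⁻¹' s) ∂ν₂ := by
      rw [← h12s, lintegral_map hg measurable_snd]
    rw [step]
    have hfst : π₂₃.fst = ν₂ := by rw [Measure.fst, h23f]
    conv_rhs => rw [← π₂₃.disintegrate π₂₃.condKernel]
    rw [Measure.compProd_apply hs, hfst]
  -- the (1) marginal
  have hmarg1 : π.map Prod.fst = π₁₂ := by
    rw [hπ]
    exact Measure.fst_compProd π₁₂ L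
  -- the glued coupling
  set π₁₃ : Measure (E × E) := π.map (fun p : (E × E) × E => (p.1.1, p.2)) with hπ₁₃
  haveI : IsProbabilityMeasure π₁₃ := by
    rw [hπ₁₃]; exact Measure.isProbabilityMeasure_map hψ.aemeasurable
  have hm13f : π₁₃.map Prod.fst = ν₁ := by
    rw [hπ₁₃, Measure.map_map measurable_fst hψ]
    have : (Prod.fst ∘ fun p : (E × E) × E => (p.1.1, p.2)) = (Prod.fst ∘ Prod.fst) := rfl
    rw [this, ← Measure.map_map measurable_fst measurable_fst, hmarg1, h12f]
  have hm13s : π₁₃.map Prod.snd = ν₃ := by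
    rw [hπ₁₃, Measure.map_map measurable_snd hψ]
    have : (Prod.snd ∘ fun p : (E × E) × E => (p.1.1, p.2))
        = (Prod.snd ∘ fun p : (E × E) × E => (p.1.2, p.2)) := rfl
    rw [this, ← Measure.map_map measurable_snd hφ, hmarg23, h23s]
  -- the integral bound
  have hint13 : ∫⁻ p, ENNReal.ofReal (d' p.1 p.2) ∂π₁₃
      = ∫⁻ q, ENNReal.ofReal (d' q.1.1 q.2) ∂π := by
    rw [hπ₁₃, lintegral_map hmd'.ennreal_ofReal hψ]
  have hpt : ∀ q : (E × E) × E, ENNReal.ofReal (d' q.1.1 q.2) ≤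
      ENNReal.ofReal C * (ENNReal.ofReal (d q.1.1 q.1.2) + ENNReal.ofReal (d q.1.2 q.2)) := by
    intro q
    rw [← ENNReal.ofReal_add (hd _ _) (hd _ _), ← ENNReal.ofReal_mul hC0]
    exact ENNReal.ofReal_le_ofReal (hC _ _ _)
  have hmf : Measurable fun q : (E × E) × E => ENNReal.ofReal (d q.1.1 q.1.2) :=
    (hmd.ennreal_ofReal).comp measurable_fst
  have hmg : Measurable fun q : (E × E) × E => ENNReal.ofReal (d q.1.2 q.2) :=
    (hmd.ennreal_ofReal).comp hφ
  have hsplit : ∫⁻ q, ENNReal.ofReal C *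
        (ENNReal.ofReal (d q.1.1 q.1.2) + ENNReal.ofReal (d q.1.2 q.2)) ∂π
      = ENNReal.ofReal C * ((∫⁻ q, ENNReal.ofReal (d q.1.1 q.1.2) ∂π)
          + ∫⁻ q, ENNReal.ofReal (d q.1.2 q.2) ∂π) := by
    rw [lintegral_const_mul (f := fun q : (E × E) × E => ENNReal.ofReal (d q.1.1 q.1.2) + ENNReal.ofReal (d q.1.2 q.2)) _ (hmf.add hmg), lintegral_add_left hmf]
  have hi1 : ∫⁻ q, ENNReal.ofReal (d q.1.1 q.1.2) ∂π
      = ∫⁻ p, ENNReal.ofReal (d p.1 p.2) ∂π₁₂ := by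
    rw [← hmarg1, lintegral_map hmd.ennreal_ofReal measurable_fst]
  have hi2 : ∫⁻ q, ENNReal.ofReal (d q.1.2 q.2) ∂π
      = ∫⁻ p, ENNReal.ofReal (d p.1 p.2) ∂π₂₃ := by
    rw [← hmarg23, lintegral_map hmd.ennreal_ofReal hφ]
  have hWd : Wd ν₁ ν₃ d' ≤ ∫⁻ p, ENNReal.ofReal (d' p.1 p.2) ∂π₁₃ :=
    sInf_le ⟨π₁₃, inferInstance, hm13f, hm13s, rfl⟩
  calc Wd ν₁ ν₃ d' ≤ ∫⁻ p, ENNReal.ofReal (d' p.1 p.2) ∂π₁₃ := hWd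
    _ = ∫⁻ q, ENNReal.ofReal (d' q.1.1 q.2) ∂π := hint13
    _ ≤ ∫⁻ q, ENNReal.ofReal C *
        (ENNReal.ofReal (d q.1.1 q.1.2) + ENNReal.ofReal (d q.1.2 q.2)) ∂π := lintegral_mono hpt
    _ = _ := by rw [hsplit, hi1, hi2]

lemma exists_coupling_lt {E : Type*} [MeasurableSpace E] {μ ν : Measure E} {d : E → E → ℝ}
    {x : ℝ≥0∞} (h : Wd μ ν d < x) :
    ∃ π : Measure (E × E), IsProbabilityMeasure π ∧ π.map Prod.fst = μ ∧ π.map Prod.snd = ν ∧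
      (∫⁻ p, ENNReal.ofReal (d p.1 p.2) ∂π) < x := by
  rw [Wd] at h
  obtain ⟨r, ⟨π, hπ, hf, hs, rfl⟩, hlt⟩ := sInf_lt_iff.mp h
  exact ⟨π, hπ, hf, hs, hlt⟩


/-- Generalized triangle inequality for the coupling distances
associated with `d^{με}_{N,β}` on `H × M`. -/
theorem Wd_dEps_triangle
    [CompleteSpace H] [TopologicalSpace.SeparableSpace H]
    [MeasurableSpace H] [BorelSpace H]
    [CompleteSpace M] [TopologicalSpace.SeparableSpace M]
    [MeasurableSpace M] [BorelSpace M]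
    (κ : ℝ) (hκ : κ ∈ Set.Ioo (0 : ℝ) 1) (N β : ℝ) (hN : 0 < N) (hβ : 0 < β) :
    ∃ C > (0 : ℝ), ∀ ν₁ ν₂ ν₃ : Measure (H × M),
      IsProbabilityMeasure ν₁ → IsProbabilityMeasure ν₂ → IsProbabilityMeasure ν₃ →
      Wd ν₁ ν₃ (dEps κ N (β / 2)) ≤
        ENNReal.ofReal C * (Wd ν₁ ν₂ (dEps κ N β) + Wd ν₂ ν₃ (dEps κ N β)) := by
  obtain ⟨C, hC1, hC⟩ := dEps_generalized_triangle (H := H) (M := M) κ hκ N β hN hβ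
  have hC0 : (0:ℝ) < C := by linarith
  refine ⟨C, hC0, ?_⟩
  intro ν₁ ν₂ ν₃ h1 h2 h3
  have hmd : Measurable fun p : (H × M) × (H × M) => dEps κ N β p.1 p.2 :=
    (continuous_dEps κ N β).measurable
  have hmd' : Measurable fun p : (H × M) × (H × M) => dEps κ N (β / 2) p.1 p.2 :=
    (continuous_dEps κ N (β / 2)).measurable
  have hCne : ENNReal.ofReal C ≠ 0 := by
    simp [ENNReal.ofReal_eq_zero, not_le, hC0]
  set A := Wd ν₁ ν₂ (dEps κ N β) with hA
  set B := Wd ν₂ ν₃ (dEps κ N β) with hB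
  rcases eq_or_ne A ⊤ with hAt | hAt
  · rw [hAt, top_add, ENNReal.mul_top hCne]
    exact le_top
  rcases eq_or_ne B ⊤ with hBt | hBt
  · rw [hBt, add_top, ENNReal.mul_top hCne]
    exact le_top
  apply ENNReal.le_of_forall_pos_le_add
  intro ε hε hlt
  set δ : ℝ≥0∞ := (ε : ℝ≥0∞) / (2 * ENNReal.ofReal C) with hδ
  have hδ0 : δ ≠ 0 := by
    rw [hδ]
    refine ENNReal.div_ne_zero.mpr ⟨?_, ?_⟩
    · exact_mod_cast hε.ne'
    · exact ENNReal.mul_ne_top (by norm_num) ENNReal.ofReal_ne_top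
  have hAlt : Wd ν₁ ν₂ (dEps κ N β) < A + δ := ENNReal.lt_add_right hAt hδ0
  have hBlt : Wd ν₂ ν₃ (dEps κ N β) < B + δ := ENNReal.lt_add_right hBt hδ0
  obtain ⟨π₁₂, hp12, h12f, h12s, hI12⟩ := exists_coupling_lt hAlt
  obtain ⟨π₂₃, hp23, h23f, h23s, hI23⟩ := exists_coupling_lt hBlt
  haveI := hp12; haveI := hp23
  calc Wd ν₁ ν₃ (dEps κ N (β / 2))
      ≤ ENNReal.ofReal C * ((∫⁻ p, ENNReal.ofReal (dEps κ N β p.1 p.2) ∂π₁₂)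
          + ∫⁻ p, ENNReal.ofReal (dEps κ N β p.1 p.2) ∂π₂₃) :=
        Wd_le_glue (dEps_nonneg κ N β) hmd hmd' hC0.le hC h12f h12s h23f h23s
    _ ≤ ENNReal.ofReal C * ((A + δ) + (B + δ)) :=
        mul_le_mul_right (add_le_add hI12.le hI23.le) _
    _ = ENNReal.ofReal C * (A + B) + 2 * ENNReal.ofReal C * δ := by ring
    _ ≤ ENNReal.ofReal C * (A + B) + ε := by
        refine add_le_add_right ?_ _
        rw [hδ]
        exact ENNReal.mul_div_le


end
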